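/- Two-variable partition identity: for every integer n ≥ 1, the following identity holds in the field ℚ(t,u) of rational functions in two indeterminates: Σ_{λ: |λ| = n} t^{2n(λ) − ℓ(λ)(ℓ(λ)−1)} · ((t;t)_{ℓ(λ)−1} / ∏_{i≥1} (t;t)_{m_i(λ)}) · ∏_{i=1}^{ℓ(λ)} (u − t^{i−1}) = (u^n − 1)/(1 − t^n), where the sum is over all partitions of n. (Note ∏_{i=1}^{ℓ} (u − t^{i−1}) = (u^{−1};t)_ℓ · u^ℓ.) -/

import Mathlib

open scoped BigOperators

/-- A partition: a weakly decreasing, finitely supported sequence of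
nonnegative integers, indexed from `0` (so `parts 0` is `λ₁`). -/
structure Ptn where
  parts : ℕ → ℕ
  antitone' : Antitone parts
  exists_zero : ∃ N, parts N = 0

namespace Ptn

/-- `|λ| = Σᵢ λᵢ`. -/
noncomputable def size (l : Ptn) : ℕ := ∑ᶠ j, l.parts j

/-- `ℓ(λ)`, the number of nonzero parts. -/
noncomputable def len (l : Ptn) : ℕ := Set.ncard {j | l.parts j ≠ 0}

/-- `n(λ) = Σᵢ (i-1) λᵢ` (with 1-based `i`). -/
noncomputable def nstat (l : Ptn) : ℕ := ∑ᶠ j, j * l.parts j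

/-- `λ'ᵢ = #{j : λⱼ ≥ i}`, the transpose partition (meaningful for `i ≥ 1`). -/
noncomputable def conj (l : Ptn) (i : ℕ) : ℕ := Set.ncard {j | i ≤ l.parts j}

/-- `mᵢ(λ) = #{j : λⱼ = i}` (meaningful for `i ≥ 1`). -/
noncomputable def mult (l : Ptn) (i : ℕ) : ℕ := Set.ncard {j | l.parts j = i}

/-- The partition `(1^n)`. -/
def onePow (n : ℕ) : Ptn where
  parts := fun j => if j < n then 1 else 0
  antitone' := by
    intro a b hab
    simp only
    split_ifs <;> omega
  exists_zero := ⟨n, by simp⟩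

/-- The one-row partition `(n)`. -/
def single (n : ℕ) : Ptn where
  parts := fun j => if j = 0 then n else 0
  antitone' := by
    intro a b hab
    simp only
    split_ifs <;> omega
  exists_zero := ⟨n + 1, by simp⟩

/-- The empty partition. -/
def empty : Ptn := onePow 0

end Ptn

/-- The q-Pochhammer symbol `(x;t)_n = ∏_{i=1}^n (1 - x t^{i-1})`. -/
def qPoch {K : Type*} [CommRing K] (x t : K) (n : ℕ) : K :=
  ∏ i ∈ Finset.range n, (1 - x * t ^ i)

/-- The Gaussian binomial coefficient `[n choose r]_t`, zero for `r > n`. -/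
noncomputable def qBinom {K : Type*} [Field K] (t : K) (n r : ℕ) : K :=
  if r ≤ n then qPoch t t n / (qPoch t t r * qPoch t t (n - r)) else 0

/-- The Gaussian binomial coefficient with integer arguments,
zero outside `0 ≤ r ≤ n`. -/
noncomputable def qBinomZ {K : Type*} [Field K] (t : K) (n r : ℤ) : K :=
  if 0 ≤ r ∧ r ≤ n then
    qPoch t t n.toNat / (qPoch t t r.toNat * qPoch t t (n - r).toNat)
  else 0

/-- `I_λ = ⊕ᵢ k[X]/(X^{λᵢ})`, a module over `k[X]` on which `X` acts nilpotently. -/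
def Imod (k : Type*) [Field k] (l : Ptn) : Type _ :=
  ∀ i : Fin l.len, Polynomial k ⧸ Ideal.span {(Polynomial.X : Polynomial k) ^ l.parts (i : ℕ)}

noncomputable instance (k : Type*) [Field k] (l : Ptn) : AddCommGroup (Imod k l) :=
  inferInstanceAs (AddCommGroup
    (∀ i : Fin l.len, Polynomial k ⧸ Ideal.span {(Polynomial.X : Polynomial k) ^ l.parts (i : ℕ)}))

noncomputable instance (k : Type*) [Field k] (l : Ptn) : Module (Polynomial k) (Imod k l) :=
  inferInstanceAs (Module (Polynomial k)
    (∀ i : Fin l.len, Polynomial k ⧸ Ideal.span {(Polynomial.X : Polynomial k) ^ l.parts (i : ℕ)}))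

/-- The Hall number `g^λ_{μ,ν}`: the number of `k[X]`-submodules `N ⊆ I_λ` with
`N ≅ I_ν` and `I_λ/N ≅ I_μ`. -/
noncomputable def hallNum (k : Type*) [Field k] (l m n : Ptn) : ℕ :=
  Nat.card {N : Submodule (Polynomial k) (Imod k l) //
    Nonempty ((↥N) ≃ₗ[Polynomial k] Imod k n) ∧
    Nonempty ((Imod k l ⧸ N) ≃ₗ[Polynomial k] Imod k m)}

/-- `a_λ`, the number of `k[X]`-module automorphisms of `I_λ`. -/
noncomputable def aut (k : Type*) [Field k] (l : Ptn) : ℕ :=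
  Nat.card (Imod k l ≃ₗ[Polynomial k] Imod k l)

/-- The indeterminate `t` in the rational function field `ℚ(t,u) = (ℚ(t))(u)`. -/
noncomputable def tVar : RatFunc (RatFunc ℚ) := RatFunc.C RatFunc.X

/-- The indeterminate `u` in the rational function field `ℚ(t,u) = (ℚ(t))(u)`. -/
noncomputable def uVar : RatFunc (RatFunc ℚ) := RatFunc.X


/-! ### Auxiliary lemmas for the proof -/

namespace Ptn

lemma ptn_ext {l m : Ptn} (h : l.parts = m.parts) : l = m := by
  cases l; cases m; simpa using h

lemma eventually_zero (l : Ptn) : ∃ N, ∀ j, N ≤ j → l.parts j = 0 := by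
  obtain ⟨N, hN⟩ := l.exists_zero
  exact ⟨N, fun j hj => Nat.le_zero.mp (hN ▸ l.antitone' hj)⟩

lemma support_eq_Iio (l : Ptn) : {j | l.parts j ≠ 0} = Set.Iio l.len := by
  obtain ⟨N, hN⟩ := l.eventually_zero
  have hdc : ∀ {i j : ℕ}, i ≤ j → l.parts j ≠ 0 → l.parts i ≠ 0 := by
    intro i j hij hj
    have := l.antitone' hij
    omega
  have hNc : l.parts N = 0 := hN N le_rfl
  have hne : {j | l.parts j = 0}.Nonempty := ⟨N, hNc⟩
  set n := sInf {j | l.parts j = 0} with hn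
  have hmem : l.parts n = 0 := Nat.sInf_mem hne
  have heq : {j | l.parts j ≠ 0} = Set.Iio n := by
    ext k
    simp only [Set.mem_setOf_eq, Set.mem_Iio]
    constructor
    · intro hk
      by_contra h
      exact (hdc (Nat.le_of_not_lt h) hk) hmem
    · intro hk h0
      have h1 := Nat.sInf_le (show k ∈ {j | l.parts j = 0} from h0)
      rw [← hn] at h1
      omega
  have hlen : l.len = n := by
    rw [len, heq, ← Finset.coe_Iio, Set.ncard_coe_finset, Nat.card_Iio]
  rw [heq, hlen]

lemma parts_ne_zero_iff (l : Ptn) (j : ℕ) : l.parts j ≠ 0 ↔ j < l.len := by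
  conv_lhs => rw [show (l.parts j ≠ 0) = (j ∈ {i | l.parts i ≠ 0}) from rfl]
  rw [support_eq_Iio]; exact Set.mem_Iio

lemma parts_eq_zero (l : Ptn) {j : ℕ} (h : l.len ≤ j) : l.parts j = 0 := by
  have := l.parts_ne_zero_iff j
  omega

lemma parts_pos (l : Ptn) {j : ℕ} (h : j < l.len) : 1 ≤ l.parts j := by
  have := l.parts_ne_zero_iff j
  omega

lemma size_eq_sum (l : Ptn) {N : ℕ} (h : l.len ≤ N) :
    l.size = ∑ j ∈ Finset.range N, l.parts j := by
  apply finsum_eq_finset_sum_of_support_subset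
  rw [Function.support, support_eq_Iio, Finset.coe_range]
  exact Set.Iio_subset_Iio h

lemma nstat_eq_sum (l : Ptn) {N : ℕ} (h : l.len ≤ N) :
    l.nstat = ∑ j ∈ Finset.range N, j * l.parts j := by
  apply finsum_eq_finset_sum_of_support_subset
  rw [Finset.coe_range]
  intro j hj
  simp only [Function.mem_support] at hj
  have : l.parts j ≠ 0 := by intro h0; rw [h0] at hj; simp at hj
  rw [parts_ne_zero_iff] at this
  exact Set.mem_Iio.mpr (lt_of_lt_of_le this h)

lemma len_le_size (l : Ptn) : l.len ≤ l.size := by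
  rw [l.size_eq_sum le_rfl]
  calc l.len = ∑ _j ∈ Finset.range l.len, 1 := by simp
  _ ≤ _ := Finset.sum_le_sum fun j hj => l.parts_pos (Finset.mem_range.mp hj)

lemma parts_le_size (l : Ptn) (j : ℕ) : l.parts j ≤ l.size := by
  rcases Nat.lt_or_ge j l.len with h | h
  · rw [l.size_eq_sum le_rfl]
    exact Finset.single_le_sum (fun i _ => Nat.zero_le _) (Finset.mem_range.mpr h)
  · rw [l.parts_eq_zero h]; exact Nat.zero_le _

lemma len_pos_of_size_pos (l : Ptn) (h : 1 ≤ l.size) : 1 ≤ l.len := by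
  by_contra hc
  have hl : l.len = 0 := by omega
  have : l.size = 0 := by
    rw [l.size_eq_sum (le_of_eq hl), Finset.sum_eq_zero]
    intro j hj
    exact l.parts_eq_zero (by omega)
  omega

lemma mult_eq_zero_of_size_lt (l : Ptn) {i : ℕ} (h : l.size < i) : l.mult i = 0 := by
  have : {j | l.parts j = i} = ∅ := by
    ext j
    simp only [Set.mem_setOf_eq, Set.mem_empty_iff_false, iff_false]
    intro hj
    have := l.parts_le_size j
    omega
  rw [mult, this, Set.ncard_empty]

lemma len_empty : Ptn.empty.len = 0 := by
  have h : {j | Ptn.empty.parts j ≠ 0} = ∅ := by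
    ext j; simp [empty, onePow]
  rw [len, h, Set.ncard_empty]

lemma size_eq_zero_iff (l : Ptn) : l.size = 0 ↔ l = empty := by
  constructor
  · intro h
    apply ptn_ext
    funext j
    have h1 := l.parts_le_size j
    have : l.parts j = 0 := by omega
    simp [this, empty, onePow]
  · rintro rfl
    rw [size_eq_sum _ (le_of_eq len_empty)]
    simp

noncomputable def strip (l : Ptn) : Ptn where
  parts := fun j => l.parts j - 1
  antitone' := fun _ _ h => Nat.sub_le_sub_right (l.antitone' h) 1
  exists_zero := by obtain ⟨N, hN⟩ := l.exists_zero; exact ⟨N, by simp [hN]⟩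

@[simp] lemma strip_parts (l : Ptn) (j : ℕ) : (strip l).parts j = l.parts j - 1 := rfl

lemma strip_len_le (l : Ptn) : (strip l).len ≤ l.len := by
  by_contra h
  have h1 : l.len < (strip l).len := by omega
  have h2 := (strip l).parts_pos h1
  have h3 := l.parts_eq_zero (le_refl l.len)
  simp only [strip_parts, h3] at h2
  omega

lemma strip_parts_add_one (l : Ptn) {j : ℕ} (h : j < l.len) :
    l.parts j = (strip l).parts j + 1 := by
  have := l.parts_pos h
  simp only [strip_parts]
  omega

lemma strip_size (l : Ptn) : l.size = (strip l).size + l.len := by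
  rw [l.size_eq_sum le_rfl, (strip l).size_eq_sum (strip_len_le l)]
  calc ∑ j ∈ Finset.range l.len, l.parts j
      = ∑ j ∈ Finset.range l.len, ((strip l).parts j + 1) := by
        refine Finset.sum_congr rfl fun j hj => ?_
        exact l.strip_parts_add_one (Finset.mem_range.mp hj)
  _ = _ := by rw [Finset.sum_add_distrib]; simp

lemma strip_nstat (l : Ptn) : 2 * l.nstat = 2 * (strip l).nstat + l.len * (l.len - 1) := by
  rw [l.nstat_eq_sum le_rfl, (strip l).nstat_eq_sum (strip_len_le l)]
  have : ∑ j ∈ Finset.range l.len, j * l.parts j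
      = (∑ j ∈ Finset.range l.len, j * (strip l).parts j) + ∑ j ∈ Finset.range l.len, j := by
    rw [← Finset.sum_add_distrib]
    refine Finset.sum_congr rfl fun j hj => ?_
    rw [l.strip_parts_add_one (Finset.mem_range.mp hj)]
    ring
  rw [this]
  have h2 := Finset.sum_range_id_mul_two l.len
  omega

lemma strip_mult_one (l : Ptn) : l.mult 1 = l.len - (strip l).len := by
  have hset : {j | l.parts j = 1} = Set.Ico (strip l).len l.len := by
    ext j
    simp only [Set.mem_setOf_eq, Set.mem_Ico]
    constructor
    · intro hj
      constructor
      · by_contra h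
        have := (strip l).parts_pos (j := j) (by omega)
        simp only [strip_parts, hj] at this
        omega
      · have := l.parts_ne_zero_iff j
        omega
    · rintro ⟨h1, h2⟩
      have hp := l.parts_pos h2
      have hsp : (strip l).parts j = 0 := (strip l).parts_eq_zero h1
      simp only [strip_parts] at hsp
      omega
  rw [mult, hset, ← Finset.coe_Ico, Set.ncard_coe_finset, Nat.card_Ico]

lemma strip_mult_succ (l : Ptn) (i : ℕ) : l.mult (i + 2) = (strip l).mult (i + 1) := by
  have hset : {j | l.parts j = i + 2} = {j | (strip l).parts j = i + 1} := by
    ext j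
    simp only [Set.mem_setOf_eq, strip_parts]
    omega
  rw [mult, hset, mult]

noncomputable def clothe (k : ℕ) (v : Ptn) : Ptn where
  parts := fun j => if j < k then v.parts j + 1 else 0
  antitone' := by
    intro a b hab
    simp only
    split_ifs with hb ha
    · exact Nat.add_le_add_right (v.antitone' hab) 1
    · omega
    · exact Nat.zero_le _
    · exact Nat.zero_le _
  exists_zero := ⟨k, by simp⟩

@[simp] lemma clothe_parts (k : ℕ) (v : Ptn) (j : ℕ) :
    (clothe k v).parts j = if j < k then v.parts j + 1 else 0 := rfl

lemma clothe_len (k : ℕ) (v : Ptn) : (clothe k v).len = k := by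
  have hset : {j | (clothe k v).parts j ≠ 0} = Set.Iio k := by
    ext j
    simp only [Set.mem_setOf_eq, clothe_parts, Set.mem_Iio]
    split_ifs with h <;> simp [h]
  rw [len, hset, ← Finset.coe_Iio, Set.ncard_coe_finset, Nat.card_Iio]

lemma strip_clothe (k : ℕ) (v : Ptn) (h : v.len ≤ k) : strip (clothe k v) = v := by
  apply ptn_ext
  funext j
  simp only [strip_parts, clothe_parts]
  split_ifs with hj
  · omega
  · have : v.parts j = 0 := v.parts_eq_zero (by omega)
    omega

lemma clothe_strip (l : Ptn) : clothe l.len (strip l) = l := by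
  apply ptn_ext
  funext j
  simp only [clothe_parts, strip_parts]
  split_ifs with hj
  · have := l.parts_pos hj
    omega
  · exact (l.parts_eq_zero (by omega)).symm

lemma clothe_size (k : ℕ) (v : Ptn) (h : v.len ≤ k) : (clothe k v).size = v.size + k := by
  have := (clothe k v).strip_size
  rw [strip_clothe k v h, clothe_len k v] at this
  omega

lemma setFinite_size (n : ℕ) : {l : Ptn | l.size = n}.Finite := by
  classical
  have hinj : Set.InjOn (fun l : Ptn => fun j : Fin (n+1) => l.parts j)
      {l : Ptn | l.size = n} := by
    intro l1 h1 l2 h2 h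
    simp only [Set.mem_setOf_eq] at h1 h2
    apply ptn_ext
    funext j
    rcases Nat.lt_or_ge j (n+1) with hj | hj
    · exact congrFun h ⟨j, hj⟩
    · rw [l1.parts_eq_zero (by have := l1.len_le_size; omega),
        l2.parts_eq_zero (by have := l2.len_le_size; omega)]
  have himg : ((fun l : Ptn => fun j : Fin (n+1) => l.parts j) '' {l | l.size = n}).Finite := by
    apply (Set.Finite.pi fun _ : Fin (n+1) => Set.finite_Iic n).subset
    rintro g ⟨l, hl, rfl⟩
    intro j _
    simp only [Set.mem_setOf_eq] at hl
    exact Set.mem_Iic.mpr (hl ▸ l.parts_le_size j)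
  exact Set.Finite.of_finite_image himg hinj

lemma setFinite_size_len (m k : ℕ) : {l : Ptn | l.size = m ∧ l.len ≤ k}.Finite :=
  (setFinite_size m).subset fun l hl => hl.1

end Ptn

section QAlg
variable {K : Type*} [Field K] (t : K) (ht1 : ∀ i : ℕ, t ^ (i+1) ≠ 1)

lemma qPoch_zero (x : K) : qPoch x t 0 = 1 := by simp [qPoch]

lemma qPoch_succ (x : K) (n : ℕ) : qPoch x t (n+1) = qPoch x t n * (1 - x * t ^ n) := by
  simp [qPoch, Finset.prod_range_succ]

include ht1 in
lemma one_sub_ne (i : ℕ) : (1 : K) - t * t ^ i ≠ 0 := by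
  have := ht1 i
  intro h
  exact this (by rw [pow_succ']; linear_combination -h)

include ht1 in
lemma qPoch_ne_zero (n : ℕ) : qPoch t t n ≠ 0 := by
  induction n with
  | zero => simp [qPoch]
  | succ n ih => rw [qPoch_succ]; exact mul_ne_zero ih (one_sub_ne t ht1 n)

lemma qBinom_eq_zero {n r : ℕ} (h : n < r) : qBinom t n r = 0 := by
  simp [qBinom, Nat.not_le.mpr h]

lemma qBinom_of_le {n r : ℕ} (h : r ≤ n) :
    qBinom t n r = qPoch t t n / (qPoch t t r * qPoch t t (n - r)) := by
  simp [qBinom, h]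

include ht1 in
lemma qBinom_zero (n : ℕ) : qBinom t n 0 = 1 := by
  rw [qBinom_of_le t (Nat.zero_le n), Nat.sub_zero, qPoch_zero, one_mul,
    div_self (qPoch_ne_zero t ht1 n)]

include ht1 in
lemma qBinom_self (n : ℕ) : qBinom t n n = 1 := by
  rw [qBinom_of_le t le_rfl, Nat.sub_self, qPoch_zero, mul_one,
    div_self (qPoch_ne_zero t ht1 n)]

lemma qBinom_symm {n r : ℕ} (h : r ≤ n) : qBinom t n r = qBinom t n (n - r) := by
  rw [qBinom_of_le t h, qBinom_of_le t (Nat.sub_le n r), Nat.sub_sub_self h, mul_comm]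

include ht1 in
/-- Pascal rule I : `[n+1, k+1] = [n, k] + t^(k+1) [n, k+1]`. -/
lemma qBinom_pascal₁ (n k : ℕ) :
    qBinom t (n+1) (k+1) = qBinom t n k + t ^ (k+1) * qBinom t n (k+1) := by
  rcases le_or_gt (k+1) n with h | h
  · have hk : k ≤ n := Nat.le_of_succ_le h
    rw [qBinom_of_le t (by omega), qBinom_of_le t hk, qBinom_of_le t h]
    have e1 : n + 1 - (k+1) = n - k := by omega
    have e4 : qPoch t t (n - k) = qPoch t t (n - (k+1)) * (1 - t * t ^ (n - (k+1))) := by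
      rw [show n - k = (n - (k+1)) + 1 from by omega, qPoch_succ]
    have hA : qPoch t t n ≠ 0 := qPoch_ne_zero t ht1 _
    have hknn : qPoch t t (n - (k+1)) ≠ 0 := qPoch_ne_zero t ht1 _
    have hkk : qPoch t t k ≠ 0 := qPoch_ne_zero t ht1 _
    have h5 : (1:K) - t * t ^ k ≠ 0 := one_sub_ne t ht1 k
    have h6 : (1:K) - t * t ^ (n - (k+1)) ≠ 0 := one_sub_ne t ht1 _
    have h7 : (1:K) - t * t ^ n ≠ 0 := one_sub_ne t ht1 n
    have hn' : t ^ n = t ^ k * t * t ^ (n - (k+1)) := by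
      rw [← pow_succ, ← pow_add]; congr 1; omega
    have hk1 : t ^ (k+1) = t ^ k * t := by rw [pow_succ]
    rw [e1, qPoch_succ, qPoch_succ, e4, hn', hk1] at *
    field_simp
    ring
  · rcases Nat.eq_or_lt_of_le h with h' | h'
    · have hkn : k = n := by omega
      subst hkn
      rw [qBinom_self t ht1, qBinom_self t ht1, qBinom_eq_zero t (by omega)]
      ring
    · rw [qBinom_eq_zero t (by omega), qBinom_eq_zero t (by omega),
        qBinom_eq_zero t (by omega)]
      ring

include ht1 in
/-- Pascal rule II : `[n+1, k+1] = [n, k+1] + t^(n-k) [n, k]`. -/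
lemma qBinom_pascal₂ (n k : ℕ) :
    qBinom t (n+1) (k+1) = qBinom t n (k+1) + t ^ (n - k) * qBinom t n k := by
  rcases le_or_gt (k+1) n with h | h
  · have hk : k ≤ n := Nat.le_of_succ_le h
    rw [qBinom_of_le t (by omega), qBinom_of_le t hk, qBinom_of_le t h]
    have e1 : n + 1 - (k+1) = n - k := by omega
    have e4 : qPoch t t (n - k) = qPoch t t (n - (k+1)) * (1 - t * t ^ (n - (k+1))) := by
      rw [show n - k = (n - (k+1)) + 1 from by omega, qPoch_succ]
    have hA : qPoch t t n ≠ 0 := qPoch_ne_zero t ht1 _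
    have hknn : qPoch t t (n - (k+1)) ≠ 0 := qPoch_ne_zero t ht1 _
    have hkk : qPoch t t k ≠ 0 := qPoch_ne_zero t ht1 _
    have h5 : (1:K) - t * t ^ k ≠ 0 := one_sub_ne t ht1 k
    have h6 : (1:K) - t * t ^ (n - (k+1)) ≠ 0 := one_sub_ne t ht1 _
    have h7 : (1:K) - t * t ^ n ≠ 0 := one_sub_ne t ht1 n
    have hn' : t ^ n = t ^ k * t * t ^ (n - (k+1)) := by
      rw [← pow_succ, ← pow_add]; congr 1; omega
    have hnk : t ^ (n - k) = t * t ^ (n - (k+1)) := by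
      rw [← pow_succ']; congr 1; omega
    rw [e1, qPoch_succ, qPoch_succ, e4, hn', hnk] at *
    field_simp
    ring
  · rcases Nat.eq_or_lt_of_le h with h' | h'
    · have hkn : k = n := by omega
      subst hkn
      rw [qBinom_self t ht1, qBinom_self t ht1, qBinom_eq_zero t (by omega)]
      simp
    · rw [qBinom_eq_zero t (by omega), qBinom_eq_zero t (by omega),
        qBinom_eq_zero t (by omega)]
      ring

include ht1 in
lemma qVandermonde (ht0 : t ≠ 0) (b a r : ℕ) :
    qBinom t (a+b) r = ∑ j ∈ Finset.range (r+1),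
      t ^ (((r:ℤ)-j)*((a:ℤ)-j)) * qBinom t a j * qBinom t b (r-j) := by
  induction b generalizing r with
  | zero =>
    rw [Finset.sum_eq_single r]
    · simp [qBinom_zero t ht1]
    · intro j hj hne
      have hj' : j < r := by simp at hj; omega
      rw [qBinom_eq_zero t (show 0 < r - j by omega)]
      ring
    · intro h; simp at h
  | succ b ih =>
    cases r with
    | zero => simp [qBinom_zero t ht1]
    | succ s =>
      rw [show a + (b+1) = (a+b)+1 from rfl, qBinom_pascal₂ t ht1 (a+b) s, ih (s+1), ih s]
      push_cast
      have step : ∀ j ∈ Finset.range (s+2),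
          t ^ (((s:ℤ)+1-j)*((a:ℤ)-j)) * qBinom t a j * qBinom t (b+1) (s+1-j)
          = (t ^ (((s:ℤ)+1-j)*((a:ℤ)-j)) * qBinom t a j * qBinom t b (s+1-j))
            + (if j ≤ s then t ^ (a+b-s) *
                (t ^ (((s:ℤ)-j)*((a:ℤ)-j)) * qBinom t a j * qBinom t b (s-j)) else 0) := by
        intro j hj
        rcases Nat.lt_or_ge j (s+1) with hjs | hjs
        · have hjs' : j ≤ s := by omega
          rw [if_pos hjs', show s+1-j = (s-j)+1 from by omega, qBinom_pascal₂ t ht1 b (s-j)]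
          rcases Nat.lt_or_ge a j with ha | ha
          · rw [qBinom_eq_zero t ha]; ring
          · rcases Nat.lt_or_ge b (s-j) with hb | hb
            · rw [qBinom_eq_zero t hb]
              rw [show (s:ℤ)-j = ((s-j : ℕ) : ℤ) from by push_cast; omega]
              ring
            · have e1 : t ^ (((s:ℤ)+1-j)*((a:ℤ)-j)) * t ^ (b - (s-j))
                  = t ^ (a+b-s) * t ^ (((s:ℤ)-j)*((a:ℤ)-j)) := by
                rw [show t ^ (b - (s-j)) = t ^ ((b - (s-j) : ℕ) : ℤ) from (zpow_natCast t _).symm,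
                  show t ^ (a+b-s) = t ^ ((a+b-s : ℕ) : ℤ) from (zpow_natCast t _).symm,
                  ← zpow_add₀ ht0, ← zpow_add₀ ht0]
                congr 1
                have c1 : ((b - (s-j) : ℕ) : ℤ) = (b:ℤ) - (s:ℤ) + j := by
                  push_cast [Nat.cast_sub hb, Nat.cast_sub hjs'] ; ring
                have c2 : ((a+b-s : ℕ) : ℤ) = (a:ℤ) + b - s := by
                  have : s ≤ a + b := by omega
                  push_cast [Nat.cast_sub this]; ring
                rw [c1, c2]; ring
              calc t ^ (((s:ℤ)+1-j)*((a:ℤ)-j)) * qBinom t a j *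
                    (qBinom t b (s-j+1) + t ^ (b - (s-j)) * qBinom t b (s-j))
                  = t ^ (((s:ℤ)+1-j)*((a:ℤ)-j)) * qBinom t a j * qBinom t b (s-j+1)
                    + (t ^ (((s:ℤ)+1-j)*((a:ℤ)-j)) * t ^ (b - (s-j))) * qBinom t a j
                      * qBinom t b (s-j) := by ring
                _ = _ := by rw [e1, show s-j+1 = s+1-j from by omega]; ring
        · have hj' : j = s+1 := by simp at hj; omega
          subst hj'
          rw [if_neg (by omega)]
          simp [qBinom_zero t ht1]
      rw [show s+1+1 = s+2 from rfl] at *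
      rw [Finset.sum_congr rfl step, Finset.sum_add_distrib]
      have h2 : (∑ j ∈ Finset.range (s+2), if j ≤ s then t ^ (a+b-s) *
            (t ^ (((s:ℤ)-j)*((a:ℤ)-j)) * qBinom t a j * qBinom t b (s-j)) else 0)
          = t ^ (a+b-s) * ∑ j ∈ Finset.range (s+1),
            t ^ (((s:ℤ)-j)*((a:ℤ)-j)) * qBinom t a j * qBinom t b (s-j) := by
        rw [Finset.sum_range_succ, if_neg (by omega), add_zero, Finset.mul_sum]
        exact Finset.sum_congr rfl fun j hj => if_pos (by simp at hj; omega)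
      rw [h2]

include ht1 in
lemma newton_qBinom (u : K) (n : ℕ) :
    u ^ n = ∑ l ∈ Finset.range (n+1), qBinom t n l * ∏ i ∈ Finset.range l, (u - t ^ i) := by
  induction n with
  | zero => simp [qBinom_zero t ht1]
  | succ n ih =>
    have h1 : u ^ (n+1) = ∑ l ∈ Finset.range (n+1), qBinom t n l *
        ((∏ i ∈ Finset.range (l+1), (u - t^i)) + t^l * ∏ i ∈ Finset.range l, (u - t^i)) := by
      rw [pow_succ', ih, Finset.mul_sum]
      refine Finset.sum_congr rfl fun l _ => ?_
      rw [Finset.prod_range_succ]; ring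
    rw [h1]
    simp only [mul_add]
    rw [Finset.sum_add_distrib]
    rw [Finset.sum_range_succ' (fun l => qBinom t (n+1) l * ∏ i ∈ Finset.range l, (u - t^i)) (n+1)]
    have e : ∀ l ∈ Finset.range (n+1),
        qBinom t (n+1) (l+1) * ∏ i ∈ Finset.range (l+1), (u - t^i)
        = qBinom t n l * ∏ i ∈ Finset.range (l+1), (u - t^i)
          + t^(l+1) * qBinom t n (l+1) * ∏ i ∈ Finset.range (l+1), (u - t^i) := by
      intro l _; rw [qBinom_pascal₁ t ht1 n l]; ring
    rw [Finset.sum_congr rfl e, Finset.sum_add_distrib]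
    have e2 : ∑ l ∈ Finset.range (n+1), qBinom t n l * (t^l * ∏ i ∈ Finset.range l, (u - t^i))
        = (∑ l ∈ Finset.range (n+1),
            t^(l+1) * qBinom t n (l+1) * ∏ i ∈ Finset.range (l+1), (u - t^i)) + 1 := by
      rw [Finset.sum_range_succ'
        (fun l => qBinom t n l * (t^l * ∏ i ∈ Finset.range l, (u - t^i))) n]
      rw [Finset.sum_range_succ
        (fun l => t^(l+1) * qBinom t n (l+1) * ∏ i ∈ Finset.range (l+1), (u - t^i)) n]
      rw [qBinom_eq_zero t (show n < n+1 by omega), qBinom_zero t ht1]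
      simp only [mul_zero, zero_mul, mul_one, add_zero, pow_zero, one_mul,
        Finset.range_zero, Finset.prod_empty]
      rw [add_left_inj]
      refine Finset.sum_congr rfl fun l _ => by ring
    rw [e2, qBinom_zero t ht1]
    simp only [Finset.range_zero, Finset.prod_empty, mul_one]
    ring

end QAlg

/-- The normalizing factor `b_λ(t) = ∏ᵢ (t;t)_{mᵢ(λ)}`. -/
noncomputable def Bfun {K : Type*} [Field K] (t : K) (l : Ptn) : K :=
  ∏ᶠ i : ℕ, qPoch t t (l.mult (i+1))

/-- The finite set of partitions of `m` with length at most `k`. -/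
noncomputable def PFin (m k : ℕ) : Finset Ptn := (Ptn.setFinite_size_len m k).toFinset

lemma mem_PFin {m k : ℕ} {l : Ptn} : l ∈ PFin m k ↔ l.size = m ∧ l.len ≤ k := by
  rw [PFin, Set.Finite.mem_toFinset, Set.mem_setOf_eq]

/-- `G m k = Σ_{|ν|=m, ℓ(ν) ≤ k} t^{2n(ν)} / ((t;t)_{k-ℓ(ν)} b_ν)`. -/
noncomputable def Gfun {K : Type*} [Field K] (t : K) (m k : ℕ) : K :=
  ∑ l ∈ PFin m k, t ^ (2 * l.nstat) / (qPoch t t (k - l.len) * Bfun t l)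

section GAlg
variable {K : Type*} [Field K] (t : K) (ht1 : ∀ i : ℕ, t ^ (i+1) ≠ 1)

lemma Bfun_eq_prod (l : Ptn) {N : ℕ} (h : l.size ≤ N) :
    Bfun t l = ∏ i ∈ Finset.range N, qPoch t t (l.mult (i+1)) := by
  apply finprod_eq_prod_of_mulSupport_subset
  intro i hi
  rw [Finset.coe_range, Set.mem_Iio]
  by_contra hc
  have : l.mult (i+1) = 0 := l.mult_eq_zero_of_size_lt (by omega)
  rw [Function.mem_mulSupport, this, qPoch_zero] at hi
  exact hi rfl

include ht1 in
lemma Bfun_ne_zero (l : Ptn) : Bfun t l ≠ 0 := by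
  rw [Bfun_eq_prod t l (le_refl l.size)]
  exact Finset.prod_ne_zero_iff.mpr fun i _ => qPoch_ne_zero t ht1 _

lemma Bfun_strip (l : Ptn) :
    Bfun t l = qPoch t t (l.mult 1) * Bfun t (Ptn.strip l) := by
  have h1 : Bfun t l = ∏ i ∈ Finset.range (l.size + 1), qPoch t t (l.mult (i+1)) :=
    Bfun_eq_prod t l (by omega)
  have h2 : Bfun t (Ptn.strip l)
      = ∏ i ∈ Finset.range l.size, qPoch t t ((Ptn.strip l).mult (i+1)) :=
    Bfun_eq_prod t _ (by have := l.strip_size; omega)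
  rw [h1, Finset.prod_range_succ' (fun i => qPoch t t (l.mult (i+1))) l.size]
  rw [h2]
  have e : ∀ i ∈ Finset.range l.size, qPoch t t (l.mult (i+1+1))
      = qPoch t t ((Ptn.strip l).mult (i+1)) := fun i _ => by rw [l.strip_mult_succ i]
  rw [Finset.prod_congr rfl e]
  ring

lemma Gfun_zero (k : ℕ) : Gfun t 0 k = 1 / qPoch t t k := by
  have hP : PFin 0 k = {Ptn.empty} := by
    ext l
    rw [mem_PFin, Finset.mem_singleton]
    constructor
    · rintro ⟨h1, _⟩; exact (l.size_eq_zero_iff).mp h1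
    · rintro rfl
      refine ⟨(Ptn.size_eq_zero_iff _).mpr rfl, ?_⟩
      rw [Ptn.len_empty]; exact Nat.zero_le k
  rw [Gfun, hP, Finset.sum_singleton]
  have h1 : Ptn.empty.nstat = 0 := by
    rw [Ptn.nstat_eq_sum _ (le_of_eq Ptn.len_empty)]; simp
  have h2 : Bfun t Ptn.empty = 1 := by
    rw [Bfun_eq_prod t _ (le_of_eq ((Ptn.size_eq_zero_iff _).mpr rfl))]; simp
  rw [h1, h2, Ptn.len_empty]
  simp

lemma Gfun_rec {m : ℕ} (L : ℕ) (hm : 1 ≤ m) :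
    Gfun t m L = ∑ k ∈ Finset.Icc 1 (min L m),
      t ^ (k*(k-1)) * Gfun t (m-k) k / qPoch t t (L - k) := by
  rw [Gfun, ← Finset.sum_fiberwise_of_maps_to (g := Ptn.len) (t := Finset.Icc 1 (min L m)) ?hmap]
  case hmap =>
    intro l hl
    rw [mem_PFin] at hl
    have h1 := l.len_pos_of_size_pos (by omega)
    have h2 := l.len_le_size
    rw [Finset.mem_Icc]
    omega
  refine Finset.sum_congr rfl fun k hk => ?_
  rw [Finset.mem_Icc] at hk
  have hk1 : 1 ≤ k := hk.1
  have hkL : k ≤ L := by omega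
  have hkm : k ≤ m := by omega
  have key : ∑ l ∈ (PFin m L).filter (fun l => l.len = k),
        t ^ (2 * l.nstat) / (qPoch t t (L - l.len) * Bfun t l)
      = ∑ v ∈ PFin (m-k) k,
        t ^ (k*(k-1)) * (t ^ (2 * v.nstat) / (qPoch t t (k - v.len) * Bfun t v))
          / qPoch t t (L - k) := by
    refine Finset.sum_nbij' (fun l => Ptn.strip l) (fun v => Ptn.clothe k v) ?_ ?_ ?_ ?_ ?_
    · intro l hl
      simp only [Finset.mem_filter, mem_PFin] at hl
      obtain ⟨⟨hs, _⟩, hlen⟩ := hl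
      simp only [mem_PFin]
      have := l.strip_size
      have := l.strip_len_le
      constructor
      · omega
      · omega
    · intro v hv
      rw [mem_PFin] at hv
      simp only [Finset.mem_filter, mem_PFin]
      have hcs := Ptn.clothe_size k v hv.2
      have hcl := Ptn.clothe_len k v
      refine ⟨⟨?_, ?_⟩, hcl⟩ <;> omega
    · intro l hl
      simp only [Finset.mem_filter] at hl
      rw [← hl.2]
      exact l.clothe_strip
    · intro v hv
      rw [mem_PFin] at hv
      exact Ptn.strip_clothe k v hv.2
    · intro l hl
      simp only [Finset.mem_filter, mem_PFin] at hl
      obtain ⟨⟨hs, _⟩, hlen⟩ := hl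
      have hns : 2 * l.nstat = 2 * (Ptn.strip l).nstat + k*(k-1) := by
        have := l.strip_nstat; rw [hlen] at this; exact this
      have hB : Bfun t l = qPoch t t (k - (Ptn.strip l).len) * Bfun t (Ptn.strip l) := by
        rw [Bfun_strip t l, l.strip_mult_one, hlen]
      rw [hns, pow_add, hB, hlen]
      ring
  rw [key, Gfun, Finset.mul_sum, Finset.sum_div]

include ht1 in
lemma V_id (ht0 : t ≠ 0) (m L : ℕ) (hm : 1 ≤ m) :
    ∑ k ∈ Finset.Icc 1 (min L m),
      t ^ (k*(k-1)) * qBinom t L k * qBinom t (m-1) (k-1)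
    = qBinom t (m+L-1) m := by
  have h0 := qVandermonde t ht1 ht0 L (m-1) m
  rw [show m-1+L = m+L-1 from by omega] at h0
  rw [h0, ← Finset.sum_range_reflect]
  have hsub : Finset.Icc 1 (min L m) ⊆ Finset.range (m+1) := by
    intro k hk
    rw [Finset.mem_Icc] at hk
    rw [Finset.mem_range]
    omega
  have hz : ∀ j ∈ Finset.range (m+1), j ∉ Finset.Icc 1 (min L m) →
      t ^ (((m:ℤ)-((m+1-1-j : ℕ) : ℤ))*(((m-1 : ℕ) : ℤ)-((m+1-1-j : ℕ) : ℤ)))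
        * qBinom t (m-1) (m+1-1-j) * qBinom t L (m-(m+1-1-j)) = 0 := by
    intro j hj hnj
    rw [Finset.mem_range] at hj
    rw [Finset.mem_Icc] at hnj
    rcases Nat.eq_zero_or_pos j with rfl | hj1
    · rw [qBinom_eq_zero t (show m-1 < m+1-1-0 by omega)]
      ring
    · have hjL : L < j := by omega
      rw [show m-(m+1-1-j) = j from by omega, qBinom_eq_zero t hjL]
      ring
  rw [← Finset.sum_subset hsub hz]
  refine Finset.sum_congr rfl fun k hk => ?_
  rw [Finset.mem_Icc] at hk
  have hk1 : 1 ≤ k := hk.1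
  have hkL : k ≤ L := by omega
  have hkm : k ≤ m := by omega
  rw [show m+1-1-k = m-k from by omega, show m-(m-k) = k from by omega]
  have c1 : ((m:ℤ)-(↑(m-k):ℤ)) = (k:ℤ) := by push_cast [Nat.cast_sub hkm]; ring
  have c2 : ((↑(m-1):ℤ)-(↑(m-k):ℤ)) = (k:ℤ)-1 := by
    push_cast [Nat.cast_sub hkm, Nat.cast_sub hm]; ring
  rw [c1, c2]
  have c3 : t ^ ((k:ℤ)*((k:ℤ)-1)) = t ^ (k*(k-1)) := by
    rw [show (k:ℤ)*((k:ℤ)-1) = ((k*(k-1) : ℕ) : ℤ) from by push_cast [Nat.cast_sub hk1]; ring,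
      zpow_natCast]
  rw [c3]
  have c4 : qBinom t (m-1) (m-k) = qBinom t (m-1) (k-1) := by
    rw [show m-k = m-1-(k-1) from by omega]
    exact (qBinom_symm t (show k-1 ≤ m-1 by omega)).symm
  rw [c4]
  ring

include ht1 in
lemma G_closed (ht0 : t ≠ 0) : ∀ m L : ℕ, 1 ≤ m → 1 ≤ L →
    Gfun t m L = qPoch t t (m+L-1) / (qPoch t t (L-1) * qPoch t t L * qPoch t t m) := by
  intro m
  induction m using Nat.strong_induction_on with
  | _ m ih =>
    intro L hm hL
    rw [Gfun_rec t L hm]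
    have uniform : ∀ k ∈ Finset.Icc 1 (min L m),
        t ^ (k*(k-1)) * Gfun t (m-k) k / qPoch t t (L-k)
        = t ^ (k*(k-1)) * qBinom t L k * qBinom t (m-1) (k-1) / qPoch t t L := by
      intro k hk
      rw [Finset.mem_Icc] at hk
      have hk1 : 1 ≤ k := hk.1
      have hkL : k ≤ L := by omega
      have hkm : k ≤ m := by omega
      have hG : Gfun t (m-k) k
          = qPoch t t (m-1) / (qPoch t t (k-1) * qPoch t t k * qPoch t t (m-k)) := by
        rcases Nat.lt_or_ge k m with hlt | hge
        · rw [ih (m-k) (by omega) k (by omega) hk1,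
            show m-k+k-1 = m-1 from by omega]
        · have hmk : m - k = 0 := by omega
          rw [hmk, Gfun_zero, qPoch_zero, mul_one,
            show m-1 = k-1 from by omega]
          rw [div_eq_div_iff (qPoch_ne_zero t ht1 _)
            (mul_ne_zero (qPoch_ne_zero t ht1 _) (qPoch_ne_zero t ht1 _))]
          ring
      rw [hG, qBinom_of_le t hkL,
        qBinom_of_le t (show k-1 ≤ m-1 by omega), show m-1-(k-1) = m-k from by omega]
      have n1 : qPoch t t (k-1) ≠ 0 := qPoch_ne_zero t ht1 _
      have n2 : qPoch t t k ≠ 0 := qPoch_ne_zero t ht1 _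
      have n3 : qPoch t t (m-k) ≠ 0 := qPoch_ne_zero t ht1 _
      have n4 : qPoch t t (L-k) ≠ 0 := qPoch_ne_zero t ht1 _
      have n5 : qPoch t t L ≠ 0 := qPoch_ne_zero t ht1 _
      field_simp
    rw [Finset.sum_congr rfl uniform, ← Finset.sum_div]
    have hsum := V_id t ht1 ht0 m L hm
    rw [hsum, qBinom_of_le t (show m ≤ m+L-1 by omega),
      show m+L-1-m = L-1 from by omega]
    rw [div_div]
    ring

end GAlg

lemma ratX_pow_ne_one (i : ℕ) : (RatFunc.X : RatFunc ℚ) ^ (i+1) ≠ 1 := by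
  intro h
  have hX : (RatFunc.X : RatFunc ℚ) = algebraMap (Polynomial ℚ) _ Polynomial.X :=
    (RatFunc.algebraMap_X).symm
  rw [hX, ← map_pow, ← map_one (algebraMap (Polynomial ℚ) (RatFunc ℚ))] at h
  have := IsFractionRing.injective (Polynomial ℚ) (RatFunc ℚ) h
  have hdeg := congrArg Polynomial.natDegree this
  rw [Polynomial.natDegree_X_pow, Polynomial.natDegree_one] at hdeg
  omega

lemma tVar_ne_zero : tVar ≠ 0 := by
  rw [tVar]
  simp only [ne_eq, map_eq_zero]
  exact RatFunc.X_ne_zero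

lemma tVar_pow_ne_one (i : ℕ) : tVar ^ (i+1) ≠ 1 := by
  rw [tVar, ← map_pow]
  intro h
  rw [← map_one (RatFunc.C : RatFunc ℚ →+* RatFunc (RatFunc ℚ))] at h
  exact ratX_pow_ne_one i (RingHom.injective (RatFunc.C : RatFunc ℚ →+* RatFunc (RatFunc ℚ)) h)

/-- two-variable partition identity: for every `n ≥ 1`, in `ℚ(t,u)`,
`Σ_{|λ|=n} t^{2n(λ)−ℓ(λ)(ℓ(λ)−1)} ((t;t)_{ℓ(λ)−1}/∏_{i≥1}(t;t)_{m_i(λ)})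
  ∏_{i=1}^{ℓ(λ)} (u − t^{i−1}) = (uⁿ − 1)/(1 − tⁿ)`. -/
theorem two_variable_partition_identity (n : ℕ) (hn : 1 ≤ n) :
    ∑ᶠ (lam : Ptn) (_ : lam.size = n),
        tVar ^ ((2 * lam.nstat : ℤ) - (lam.len : ℤ) * ((lam.len : ℤ) - 1)) *
          (qPoch tVar tVar (lam.len - 1) / ∏ᶠ i : ℕ, qPoch tVar tVar (lam.mult (i + 1))) *
          ∏ i ∈ Finset.range lam.len, (uVar - tVar ^ i)
      = (uVar ^ n - 1) / (1 - tVar ^ n) := by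
  classical
  have ht1 : ∀ i : ℕ, tVar ^ (i+1) ≠ 1 := tVar_pow_ne_one
  have ht0 : tVar ≠ 0 := tVar_ne_zero
  set K := RatFunc (RatFunc ℚ)
  set t : K := tVar with htdef
  set u : K := uVar with hudef
  have honesub : (1 : K) - t ^ n ≠ 0 := by
    rw [show t ^ n = t * t ^ (n-1) from by rw [← pow_succ']; congr 1; omega]
    exact one_sub_ne t ht1 (n-1)
  -- Step 1 : convert the `finsum` to a `Finset` sum
  have h1 : (∑ᶠ (lam : Ptn) (_ : lam.size = n),
        t ^ ((2 * lam.nstat : ℤ) - (lam.len : ℤ) * ((lam.len : ℤ) - 1)) *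
          (qPoch t t (lam.len - 1) / ∏ᶠ i : ℕ, qPoch t t (lam.mult (i + 1))) *
          ∏ i ∈ Finset.range lam.len, (u - t ^ i))
      = ∑ lam ∈ (Ptn.setFinite_size n).toFinset,
        t ^ ((2 * lam.nstat : ℤ) - (lam.len : ℤ) * ((lam.len : ℤ) - 1)) *
          (qPoch t t (lam.len - 1) / Bfun t lam) *
          ∏ i ∈ Finset.range lam.len, (u - t ^ i) :=
    finsum_mem_eq_finite_toFinset_sum _ (Ptn.setFinite_size n)
  rw [h1]
  -- Step 2 : group by the length
  rw [← Finset.sum_fiberwise_of_maps_to (g := Ptn.len)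
    (t := Finset.range (n+1)) ?hmap]
  case hmap =>
    intro l hl
    rw [Set.Finite.mem_toFinset, Set.mem_setOf_eq] at hl
    have h2 := l.len_le_size
    rw [Finset.mem_range]
    omega
  -- Step 3 : evaluate each fiber
  have fib : ∀ k ∈ Finset.range (n+1),
      (∑ lam ∈ ((Ptn.setFinite_size n).toFinset).filter (fun l => l.len = k),
        t ^ ((2 * lam.nstat : ℤ) - (lam.len : ℤ) * ((lam.len : ℤ) - 1)) *
          (qPoch t t (lam.len - 1) / Bfun t lam) *
          ∏ i ∈ Finset.range lam.len, (u - t ^ i))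
      = if k = 0 then 0 else
          qPoch t t (k-1) * Gfun t (n-k) k * ∏ i ∈ Finset.range k, (u - t ^ i) := by
    intro k hk
    rw [Finset.mem_range] at hk
    rcases Nat.eq_zero_or_pos k with rfl | hk1
    · rw [if_pos rfl]
      rw [Finset.sum_eq_zero]
      intro l hl
      exfalso
      simp only [Finset.mem_filter, Set.Finite.mem_toFinset, Set.mem_setOf_eq] at hl
      have := l.len_pos_of_size_pos (hl.1 ▸ hn)
      omega
    · rw [if_neg (by omega)]
      have key : (∑ lam ∈ ((Ptn.setFinite_size n).toFinset).filter (fun l => l.len = k),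
          t ^ ((2 * lam.nstat : ℤ) - (lam.len : ℤ) * ((lam.len : ℤ) - 1)) *
            (qPoch t t (lam.len - 1) / Bfun t lam) *
            ∏ i ∈ Finset.range lam.len, (u - t ^ i))
          = ∑ v ∈ PFin (n-k) k,
            qPoch t t (k-1) * (t ^ (2 * v.nstat) / (qPoch t t (k - v.len) * Bfun t v)) *
              ∏ i ∈ Finset.range k, (u - t ^ i) := by
        refine Finset.sum_nbij' (fun l => Ptn.strip l) (fun v => Ptn.clothe k v) ?_ ?_ ?_ ?_ ?_
        · intro l hl
          simp only [Finset.mem_filter, Set.Finite.mem_toFinset, Set.mem_setOf_eq] at hl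
          obtain ⟨hs, hlen⟩ := hl
          simp only [mem_PFin]
          have := l.strip_size
          have := l.strip_len_le
          constructor
          · omega
          · omega
        · intro v hv
          rw [mem_PFin] at hv
          simp only [Finset.mem_filter, Set.Finite.mem_toFinset, Set.mem_setOf_eq]
          have hcs := Ptn.clothe_size k v hv.2
          have hcl := Ptn.clothe_len k v
          refine ⟨?_, hcl⟩
          omega
        · intro l hl
          simp only [Finset.mem_filter] at hl
          rw [← hl.2]
          exact l.clothe_strip
        · intro v hv
          rw [mem_PFin] at hv
          exact Ptn.strip_clothe k v hv.2
        · intro l hl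
          simp only [Finset.mem_filter, Set.Finite.mem_toFinset, Set.mem_setOf_eq] at hl
          obtain ⟨hs, hlen⟩ := hl
          have hns : 2 * l.nstat = 2 * (Ptn.strip l).nstat + k*(k-1) := by
            have := l.strip_nstat; rw [hlen] at this; exact this
          have hexp : (2 * l.nstat : ℤ) - (l.len : ℤ) * ((l.len : ℤ) - 1)
              = ((2 * (Ptn.strip l).nstat : ℕ) : ℤ) := by
            rw [hlen]
            have hcast : ((2 * l.nstat : ℕ) : ℤ)
                = ((2 * (Ptn.strip l).nstat : ℕ) : ℤ) + ((k*(k-1) : ℕ) : ℤ) := by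
              exact_mod_cast congrArg (Nat.cast : ℕ → ℤ) hns
            have hprod : ((k*(k-1) : ℕ) : ℤ) = (k:ℤ) * ((k:ℤ) - 1) := by
              push_cast [Nat.cast_sub hk1]; ring
            rw [hprod] at hcast
            push_cast at hcast ⊢
            linarith
          have hB : Bfun t l = qPoch t t (k - (Ptn.strip l).len) * Bfun t (Ptn.strip l) := by
            rw [Bfun_strip t l, l.strip_mult_one, hlen]
          rw [hexp, zpow_natCast, hB, hlen]
          ring
      rw [key, Gfun, Finset.mul_sum, Finset.sum_mul]
  rw [Finset.sum_congr rfl fib]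
  -- Step 4 : evaluate the coefficients via the closed form of `G`
  have coeff : ∀ k, 1 ≤ k → k ≤ n →
      qPoch t t (k-1) * Gfun t (n-k) k = qPoch t t (n-1) / (qPoch t t k * qPoch t t (n-k)) := by
    intro k hk1 hkn
    rcases Nat.lt_or_ge k n with hlt | hge
    · rw [G_closed t ht1 ht0 (n-k) k (by omega) hk1, show n-k+k-1 = n-1 from by omega]
      have n1 : qPoch t t (k-1) ≠ 0 := qPoch_ne_zero t ht1 _
      have n2 : qPoch t t k ≠ 0 := qPoch_ne_zero t ht1 _
      have n3 : qPoch t t (n-k) ≠ 0 := qPoch_ne_zero t ht1 _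
      rw [mul_div_assoc', div_eq_div_iff (mul_ne_zero (mul_ne_zero n1 n2) n3) (mul_ne_zero n2 n3)]
      ring
    · have hkn' : k = n := by omega
      subst hkn'
      rw [Nat.sub_self, Gfun_zero, qPoch_zero, mul_one, mul_one_div]
  -- Step 5 : sum up using the Newton expansion
  rw [eq_div_iff honesub]
  have hnewton := newton_qBinom t ht1 u n
  have hsplit : u ^ n - 1 = ∑ j ∈ Finset.range n,
      qBinom t n (j+1) * ∏ i ∈ Finset.range (j+1), (u - t ^ i) := by
    rw [hnewton, Finset.sum_range_succ'
      (fun l => qBinom t n l * ∏ i ∈ Finset.range l, (u - t ^ i)) n]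
    rw [qBinom_zero t ht1]
    simp
  rw [hsplit]
  rw [Finset.sum_range_succ'
    (fun k => if k = 0 then 0 else
      qPoch t t (k-1) * Gfun t (n-k) k * ∏ i ∈ Finset.range k, (u - t ^ i)) n]
  rw [if_pos rfl, add_zero, Finset.sum_mul]
  refine Finset.sum_congr rfl fun j hj => ?_
  rw [Finset.mem_range] at hj
  rw [if_neg (by omega)]
  rw [show j+1-1 = j from by omega]
  have hc := coeff (j+1) (by omega) (by omega)
  rw [show (j+1)-1 = j from by omega] at hc
  rw [hc]
  rw [qBinom_of_le t (show j+1 ≤ n by omega)]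
  have hqn : qPoch t t n = qPoch t t (n-1) * (1 - t * t ^ (n-1)) := by
    rw [show n = (n-1)+1 from by omega, qPoch_succ]
    congr 2 <;> omega
  have htn : t ^ n = t * t ^ (n-1) := by rw [← pow_succ']; congr 1; omega
  rw [hqn, htn]
  have n1 : qPoch t t (j+1) ≠ 0 := qPoch_ne_zero t ht1 _
  have n2 : qPoch t t (n-(j+1)) ≠ 0 := qPoch_ne_zero t ht1 _
  have n3 : qPoch t t (n-1) ≠ 0 := qPoch_ne_zero t ht1 _
  ring
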